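/- Let α_k = 1/(k+1) for all k ≥ 1. Define σ_0 = 1 and σ_k = ∏_{j=1}^{k} √(1−α_j²); define φ_j^{(k)} by φ_k^{(k)} = α_k and φ_j^{(k)} = φ_j^{(k−1)} − α_k φ_{k−j}^{(k−1)} for 1 ≤ j ≤ k−1; and define ψ_j^{(k)} by ψ_0^{(0)} = 1, ψ_0^{(k)} = σ_k for k ≥ 1, and ψ_j^{(k)} = ∑_{i=1}^{j} φ_i^{(k)} ψ_{j−i}^{(k−i)} for 1 ≤ j ≤ k. Then ψ_j^{(k)} = σ_{k−j}/(k+2−j) for all k ≥ 1 and all 1 ≤ j ≤ k. -/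

import Mathlib

noncomputable section

/-- The Durbin–Levinson coefficients `φ_j^{(k)}`: `φ_k^{(k)} = α_k` and
`φ_j^{(k)} = φ_j^{(k−1)} − α_k φ_{k−j}^{(k−1)}` for `1 ≤ j ≤ k−1`. -/
def dlPhi (α : ℕ → ℝ) : ℕ → ℕ → ℝ
  | 0, _ => 0
  | k + 1, j =>
    if j = k + 1 then α (k + 1) else dlPhi α k j - α (k + 1) * dlPhi α k (k + 1 - j)

/-- `σ_k = ∏_{j=1}^k √(1−α_j²)` (so `σ_0 = 1`). -/
def dlSigma (α : ℕ → ℝ) (k : ℕ) : ℝ := ∏ j ∈ Finset.Icc 1 k, Real.sqrt (1 - α j ^ 2)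

/-- The coefficients `ψ_j^{(k)}`: `ψ_0^{(0)} = 1`, `ψ_0^{(k)} = σ_k` for `k ≥ 1`, and
`ψ_j^{(k)} = ∑_{i=1}^j φ_i^{(k)} ψ_{j−i}^{(k−i)}` for `1 ≤ j ≤ k`. -/
def dlPsi (α : ℕ → ℝ) : ℕ → ℕ → ℝ
  | k, 0 => dlSigma α k
  | k, j + 1 => ∑ i ∈ Finset.range (j + 1), dlPhi α k (i + 1) * dlPsi α (k - (i + 1)) (j - i)
termination_by k j => j
decreasing_by simp_wf <;> omega

lemma dlPhi_inv : ∀ k j, 1 ≤ j → j ≤ k →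
    dlPhi (fun m => 1 / ((m : ℝ) + 1)) k j = 1 / ((k : ℝ) + 1) := by
  intro k
  induction k with
  | zero => intro j h1 h2; omega
  | succ k ih =>
    intro j h1 h2
    rw [dlPhi]
    by_cases hj : j = k + 1
    · rw [if_pos hj]
    · rw [if_neg hj, ih j h1 (by omega), ih (k + 1 - j) (by omega) (by omega)]
      have h0 : ((k : ℝ) + 1) ≠ 0 := by positivity
      have h0' : ((k : ℝ) + 1 + 1) ≠ 0 := by positivity
      push_cast
      field_simp <;> ring

/-- for `α_k = 1/(k+1)` the moving-average coefficients satisfy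
`ψ_j^{(k)} = σ_{k−j}/(k+2−j)` for every `k ≥ 1` and `1 ≤ j ≤ k`. -/
theorem dlPsi_of_inv_succ :
    ∀ k, 1 ≤ k → ∀ j, 1 ≤ j → j ≤ k →
      dlPsi (fun m => 1 / ((m : ℝ) + 1)) k j =
        dlSigma (fun m => 1 / ((m : ℝ) + 1)) (k - j) / ((k + 2 - j : ℕ) : ℝ) := by
  set α := fun m : ℕ => 1 / ((m : ℝ) + 1) with hα
  suffices h : ∀ j k, 1 ≤ k → 1 ≤ j → j ≤ k →
      dlPsi α k j = dlSigma α (k - j) / ((k + 2 - j : ℕ) : ℝ) by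
    intro k hk j h1 h2; exact h j k hk h1 h2
  intro j
  induction j using Nat.strong_induction_on with
  | _ j ih =>
    intro k hk hj hjk
    obtain ⟨j, rfl⟩ : ∃ j', j = j' + 1 := ⟨j - 1, by omega⟩
    rw [dlPsi, Finset.sum_range_succ]
    have hsub1 : j - j = 0 := by omega
    rw [hsub1, dlPsi]
    have hlast : dlPhi α k (j + 1) = 1 / ((k : ℝ) + 1) := dlPhi_inv k (j + 1) (by omega) hjk
    rw [hlast]
    have hconst : ∀ i ∈ Finset.range j,
        dlPhi α k (i + 1) * dlPsi α (k - (i + 1)) (j - i) =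
        1 / ((k : ℝ) + 1) * (dlSigma α (k - (j + 1)) / ((k + 1 - j : ℕ) : ℝ)) := by
      intro i hi
      have hi' : i < j := Finset.mem_range.mp hi
      rw [dlPhi_inv k (i + 1) (by omega) (by omega),
        ih (j - i) (by omega) (k - (i + 1)) (by omega) (by omega) (by omega)]
      have e1 : k - (i + 1) - (j - i) = k - (j + 1) := by omega
      have e2 : k - (i + 1) + 2 - (j - i) = k + 1 - j := by omega
      rw [e1, e2]
    rw [Finset.sum_congr rfl hconst, Finset.sum_const, Finset.card_range, nsmul_eq_mul]
    have e3 : k + 2 - (j + 1) = k + 1 - j := by omega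
    rw [e3]
    have hc : ((k + 1 - j : ℕ) : ℝ) = (k : ℝ) + 1 - j := by
      have : j ≤ k + 1 := by omega
      push_cast [Nat.cast_sub this]; ring
    rw [hc]
    have h0 : ((k : ℝ) + 1) ≠ 0 := by positivity
    have hjk' : (j : ℝ) ≤ k := Nat.cast_le.mpr (by omega)
    have h1 : (k : ℝ) + 1 - j ≠ 0 := by
      have : (0:ℝ) < (k : ℝ) + 1 - j := by linarith
      linarith
    field_simp
    ring

end
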